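/- For n ≥ 2 and any two smooth n-loops a, b in X, the concatenations a ⋆ b and b ⋆ a are rank-n homotopic; consequently the group π_n^n(X,*) of rank-n homotopy classes of smooth n-loops under concatenation is abelian. -/

import Mathlib

/-!
STATEMENT 10: for n ≥ 2, concatenations a ⋆ b and b ⋆ a of smooth n-loops are rank-n
homotopic; consequently the group π_n^n(X,*) is abelian.
-/

open scoped Manifold

noncomputable section

/-- A smooth `n`-loop in a manifold `X` based at `x₀`: a map `[0,1]ⁿ → X` which is smooth
in the sense that it extends to a `C^∞` map on an open neighbourhood of the cube, and which
equals `x₀` whenever some coordinate lies in `[0,ε) ∪ (1-ε,1]`. -/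
structure SmoothNLoop {E HM : Type*} [NormedAddCommGroup E] [NormedSpace ℝ E]
    [TopologicalSpace HM] (IM : ModelWithCorners ℝ E HM)
    (X : Type*) [TopologicalSpace X] [ChartedSpace HM X] (n : ℕ) (x₀ : X) : Type _ where
  toFun : (Fin n → ℝ) → X
  smooth : ∃ U : Set (Fin n → ℝ), IsOpen U ∧ Set.Icc 0 1 ⊆ U ∧
      ContMDiffOn 𝓘(ℝ, Fin n → ℝ) IM (⊤ : ℕ∞) toFun U
  based : ∃ ε : ℝ, 0 < ε ∧ ∀ t ∈ Set.Icc (0 : Fin n → ℝ) 1,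
      (∃ i, t i < ε ∨ 1 - ε < t i) → toFun t = x₀

/-- Rank-`n` (thin) homotopy of smooth `n`-loops: a homotopy `K : [0,1] × [0,1]ⁿ → X`,
smooth on an open neighbourhood of its domain, which is based (condition 1), starts at `ℓ₁`
(condition 2), ends at `ℓ₂` (condition 3), and whose total differential has rank `≤ n`
throughout its domain (condition 4). -/
def ThinHomotopic {E HM : Type*} [NormedAddCommGroup E] [NormedSpace ℝ E]
    [TopologicalSpace HM] {IM : ModelWithCorners ℝ E HM}
    {X : Type*} [TopologicalSpace X] [ChartedSpace HM X] {n : ℕ} {x₀ : X}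
    (ℓ₁ ℓ₂ : SmoothNLoop IM X n x₀) : Prop :=
  ∃ (K : ℝ × (Fin n → ℝ) → X) (ε : ℝ), 0 < ε ∧
    (∃ U : Set (ℝ × (Fin n → ℝ)), IsOpen U ∧
        Set.Icc (0 : ℝ) 1 ×ˢ Set.Icc (0 : Fin n → ℝ) 1 ⊆ U ∧
        ContMDiffOn 𝓘(ℝ, ℝ × (Fin n → ℝ)) IM (⊤ : ℕ∞) K U) ∧
    (∀ s ∈ Set.Icc (0 : ℝ) 1, ∀ t ∈ Set.Icc (0 : Fin n → ℝ) 1,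
        (∃ i, t i < ε ∨ 1 - ε < t i) → K (s, t) = x₀) ∧
    (∀ s ∈ Set.Icc (0 : ℝ) 1, ∀ t ∈ Set.Icc (0 : Fin n → ℝ) 1,
        s < ε → K (s, t) = ℓ₁.toFun t) ∧
    (∀ s ∈ Set.Icc (0 : ℝ) 1, ∀ t ∈ Set.Icc (0 : Fin n → ℝ) 1,
        1 - ε < s → K (s, t) = ℓ₂.toFun t) ∧
    (∀ p ∈ Set.Icc (0 : ℝ) 1 ×ˢ Set.Icc (0 : Fin n → ℝ) 1,
        LinearMap.rank (mfderiv 𝓘(ℝ, ℝ × (Fin n → ℝ)) IM K p).toLinearMap ≤ (n : Cardinal))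

def Cube (n : ℕ) : Set (Fin n → ℝ) := Set.Icc 0 1

def concatFun {X : Type*} {n : ℕ} (hn : 0 < n) (f g : (Fin n → ℝ) → X) :
    (Fin n → ℝ) → X := fun t =>
  if t ⟨0, hn⟩ ≤ 1 / 2 then f (Function.update t ⟨0, hn⟩ (2 * t ⟨0, hn⟩))
  else g (Function.update t ⟨0, hn⟩ (2 * t ⟨0, hn⟩ - 1))

namespace Pinn

/-- smooth step -/
def sstep : ℝ → ℝ := Real.smoothTransition

lemma sstep_zero {x : ℝ} (h : x ≤ 0) : sstep x = 0 := Real.smoothTransition.zero_of_nonpos h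
lemma sstep_one {x : ℝ} (h : 1 ≤ x) : sstep x = 1 := Real.smoothTransition.one_of_one_le h
lemma sstep_nonneg (x : ℝ) : 0 ≤ sstep x := Real.smoothTransition.nonneg x
lemma sstep_le_one (x : ℝ) : sstep x ≤ 1 := Real.smoothTransition.le_one x
lemma contDiff_sstep : ContDiff ℝ (⊤ : ℕ∞) sstep := Real.smoothTransition.contDiff

def Gc (ε x : ℝ) : ℝ :=
  x + (ε - x) * (1 - sstep (x / ε)) + (1 - ε - x) * sstep ((x - (1 - ε)) / ε)

def CapC (ε v : ℝ) : ℝ := v + (1 - (3/2) * ε - v) * sstep ((v - (1 - 2*ε)) / ε)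

def lamC (ε u : ℝ) : ℝ := sstep ((u - (1/2 - ε)) / (2*ε))

def betC (ε v : ℝ) : ℝ := 2 * sstep ((v - (1/2 - ε/2)) / ε) - 1

def nuC (ε u : ℝ) : ℝ := sstep ((u - ε/2) / (ε/2)) * (1 - sstep ((u - (1 - ε)) / (ε/2)))

def rr (c s : ℝ) : ℝ := sstep (8*s - c)

def v3C (ε s u v : ℝ) : ℝ := (1 - rr 5 s) * v + rr 5 s * ((CapC ε v + lamC ε u) / 2)

def u2C (ε s u v : ℝ) : ℝ := u - (rr 3 s / 2) * betC ε (v3C ε s u v) * nuC ε u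

def v1C (ε s u v : ℝ) : ℝ :=
  (1 - rr 1 s) * v3C ε s u v +
    rr 1 s * ((1 - lamC ε (u2C ε s u v)) * Gc ε (2 * v3C ε s u v - 1) +
      lamC ε (u2C ε s u v) * Gc ε (2 * v3C ε s u v))

variable {ε x u v s : ℝ}

/-! ### Gc facts -/

lemma Gc_eps (hε : 0 < ε) (hε16 : ε ≤ 1/16) (h : x ≤ 0) : Gc ε x = ε := by
  have h1 : sstep (x / ε) = 0 :=
    sstep_zero (div_nonpos_of_nonpos_of_nonneg (by linarith) (by linarith))
  have h2 : sstep ((x - (1 - ε)) / ε) = 0 :=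
    sstep_zero (div_nonpos_of_nonpos_of_nonneg (by linarith) (by linarith))
  simp only [Gc, h1, h2]; ring

lemma Gc_low (hε : 0 < ε) (hε16 : ε ≤ 1/16) (h : x ≤ ε) : 0 ≤ Gc ε x ∧ Gc ε x ≤ ε := by
  have h2 : sstep ((x - (1 - ε)) / ε) = 0 :=
    sstep_zero (div_nonpos_of_nonpos_of_nonneg (by linarith) (by linarith))
  rcases le_or_gt x 0 with h0 | h0
  · rw [Gc_eps hε hε16 h0]; exact ⟨hε.le, le_refl _⟩
  · have hτ0 := sstep_nonneg (x / ε)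
    have hτ1 := sstep_le_one (x / ε)
    simp only [Gc, h2]
    constructor <;> nlinarith

lemma Gc_id (hε : 0 < ε) (hε16 : ε ≤ 1/16) (h1 : ε ≤ x) (h2 : x ≤ 1 - ε) : Gc ε x = x := by
  have hA : sstep (x / ε) = 1 := sstep_one ((le_div_iff₀ hε).2 (by linarith))
  have hB : sstep ((x - (1 - ε)) / ε) = 0 :=
    sstep_zero (div_nonpos_of_nonpos_of_nonneg (by linarith) (by linarith))
  simp only [Gc, hA, hB]; ring

lemma Gc_high (hε : 0 < ε) (hε16 : ε ≤ 1/16) (h : 1 - ε ≤ x) :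
    1 - ε ≤ Gc ε x ∧ Gc ε x ≤ 1 := by
  have hA : sstep (x / ε) = 1 := sstep_one ((le_div_iff₀ hε).2 (by nlinarith))
  rcases le_or_gt x 1 with h1 | h1
  · have hτ0 := sstep_nonneg ((x - (1 - ε)) / ε)
    have hτ1 := sstep_le_one ((x - (1 - ε)) / ε)
    simp only [Gc, hA]
    constructor <;> nlinarith
  · have hB : sstep ((x - (1 - ε)) / ε) = 1 := sstep_one ((le_div_iff₀ hε).2 (by linarith))
    simp only [Gc, hA, hB]
    constructor <;> nlinarith

lemma Gc_low2 (hε : 0 < ε) (hε16 : ε ≤ 1/16) (h : x ≤ 2*ε) : Gc ε x ≤ 2*ε := by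
  rcases le_or_gt x ε with h1 | h1
  · linarith [(Gc_low hε hε16 h1).2]
  · rw [Gc_id hε hε16 h1.le (by linarith)]; exact h

lemma Gc_high2 (hε : 0 < ε) (hε16 : ε ≤ 1/16) (h : 1 - 2*ε ≤ x) : 1 - 2*ε ≤ Gc ε x := by
  rcases le_or_gt x (1 - ε) with h1 | h1
  · rw [Gc_id hε hε16 (by linarith) h1]; exact h
  · linarith [(Gc_high hε hε16 h1.le).1]

lemma Gc_mem (hε : 0 < ε) (hε16 : ε ≤ 1/16) (x : ℝ) : 0 ≤ Gc ε x ∧ Gc ε x ≤ 1 := by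
  rcases le_or_gt x ε with h1 | h1
  · have := Gc_low hε hε16 h1; exact ⟨this.1, by linarith [this.2]⟩
  rcases le_or_gt x (1 - ε) with h2 | h2
  · rw [Gc_id hε hε16 h1.le h2]; constructor <;> linarith
  · have := Gc_high hε hε16 h2.le; exact ⟨by linarith [this.1], this.2⟩

/-! ### CapC facts -/

lemma Cap_id (hε : 0 < ε) (h : v ≤ 1 - 2*ε) : CapC ε v = v := by
  have h1 : sstep ((v - (1 - 2*ε)) / ε) = 0 :=
    sstep_zero (div_nonpos_of_nonpos_of_nonneg (by linarith) (by linarith))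
  simp only [CapC, h1]; ring

lemma Cap_high (hε : 0 < ε) (hε16 : ε ≤ 1/16) (h1 : 1 - 2*ε ≤ v) (h2 : v ≤ 1) :
    1 - 2*ε ≤ CapC ε v ∧ CapC ε v ≤ 1 - ε := by
  rcases le_or_gt v (1 - ε) with h3 | h3
  · have hτ0 := sstep_nonneg ((v - (1 - 2*ε)) / ε)
    have hτ1 := sstep_le_one ((v - (1 - 2*ε)) / ε)
    simp only [CapC]
    constructor <;> nlinarith
  · have hB : sstep ((v - (1 - 2*ε)) / ε) = 1 := sstep_one ((le_div_iff₀ hε).2 (by linarith))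
    simp only [CapC, hB]
    constructor <;> nlinarith

lemma Cap_mem (hε : 0 < ε) (hε16 : ε ≤ 1/16) (h0 : 0 ≤ v) (h1 : v ≤ 1) :
    0 ≤ CapC ε v ∧ CapC ε v ≤ 1 - ε := by
  rcases le_or_gt v (1 - 2*ε) with h2 | h2
  · rw [Cap_id hε h2]; constructor <;> linarith
  · have := Cap_high hε hε16 h2.le h1; exact ⟨by linarith [this.1], this.2⟩

/-! ### lamC, betC, nuC, rr facts -/

lemma lam_zero (hε : 0 < ε) (h : u ≤ 1/2 - ε) : lamC ε u = 0 :=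
  sstep_zero (div_nonpos_of_nonpos_of_nonneg (by linarith) (by linarith))

lemma lam_one (hε : 0 < ε) (h : 1/2 + ε ≤ u) : lamC ε u = 1 :=
  sstep_one ((le_div_iff₀ (by linarith)).2 (by linarith))

lemma lam_mem (u : ℝ) : 0 ≤ lamC ε u ∧ lamC ε u ≤ 1 := ⟨sstep_nonneg _, sstep_le_one _⟩

lemma bet_neg (hε : 0 < ε) (h : v ≤ 1/2 - ε/2) : betC ε v = -1 := by
  have h1 : sstep ((v - (1/2 - ε/2)) / ε) = 0 :=
    sstep_zero (div_nonpos_of_nonpos_of_nonneg (by linarith) (by linarith))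
  simp only [betC, h1]; ring

lemma bet_pos (hε : 0 < ε) (h : 1/2 + ε/2 ≤ v) : betC ε v = 1 := by
  have h1 : sstep ((v - (1/2 - ε/2)) / ε) = 1 := sstep_one ((le_div_iff₀ hε).2 (by linarith))
  simp only [betC, h1]; ring

lemma bet_mem (v : ℝ) : -1 ≤ betC ε v ∧ betC ε v ≤ 1 := by
  have h1 := sstep_nonneg ((v - (1/2 - ε/2)) / ε)
  have h2 := sstep_le_one ((v - (1/2 - ε/2)) / ε)
  unfold betC
  constructor <;> linarith

lemma nu_zero_lo (hε : 0 < ε) (h : u ≤ ε/2) : nuC ε u = 0 := by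
  have h1 : sstep ((u - ε/2) / (ε/2)) = 0 :=
    sstep_zero (div_nonpos_of_nonpos_of_nonneg (by linarith) (by linarith))
  simp only [nuC, h1]; ring

lemma nu_zero_hi (hε : 0 < ε) (h : 1 - ε/2 ≤ u) : nuC ε u = 0 := by
  have h1 : sstep ((u - (1 - ε)) / (ε/2)) = 1 :=
    sstep_one ((le_div_iff₀ (by linarith)).2 (by linarith))
  simp only [nuC, h1]; ring

lemma nu_one (hε : 0 < ε) (h1 : ε ≤ u) (h2 : u ≤ 1 - ε) : nuC ε u = 1 := by
  have hA : sstep ((u - ε/2) / (ε/2)) = 1 :=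
    sstep_one ((le_div_iff₀ (by linarith)).2 (by linarith))
  have hB : sstep ((u - (1 - ε)) / (ε/2)) = 0 :=
    sstep_zero (div_nonpos_of_nonpos_of_nonneg (by linarith) (by linarith))
  simp only [nuC, hA, hB]; ring

lemma nu_mem (u : ℝ) : 0 ≤ nuC ε u ∧ nuC ε u ≤ 1 := by
  have h1 := sstep_nonneg ((u - ε/2) / (ε/2))
  have h2 := sstep_le_one ((u - ε/2) / (ε/2))
  have h3 := sstep_nonneg ((u - (1 - ε)) / (ε/2))
  have h4 := sstep_le_one ((u - (1 - ε)) / (ε/2))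
  constructor <;> (simp only [nuC]; nlinarith)

lemma rr_zero {c : ℝ} (h : 8*s ≤ c) : rr c s = 0 := sstep_zero (show 8*s - _ ≤ 0 by linarith)
lemma rr_one {c : ℝ} (h : c + 1 ≤ 8*s) : rr c s = 1 := sstep_one (show (1:ℝ) ≤ 8*s - _ by linarith)
lemma rr_mem (c s : ℝ) : 0 ≤ rr c s ∧ rr c s ≤ 1 := ⟨sstep_nonneg _, sstep_le_one _⟩

lemma regime (s : ℝ) :
    (rr 3 s = 0 ∧ rr 5 s = 0) ∨ (rr 1 s = 1 ∧ rr 5 s = 0) ∨ (rr 1 s = 1 ∧ rr 3 s = 1) := by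
  rcases le_or_gt (8*s) 3 with h | h
  · exact Or.inl ⟨rr_zero h, rr_zero (by linarith)⟩
  rcases le_or_gt (8*s) 5 with h2 | h2
  · exact Or.inr (Or.inl ⟨rr_one (by linarith), rr_zero h2⟩)
  · exact Or.inr (Or.inr ⟨rr_one (by linarith), rr_one (by linarith)⟩)

/-! ### value helpers -/

lemma v1_eq_A (hε : 0 < ε) (hr1 : rr 1 s = 1) (h : u2C ε s u v ≤ 1/2 - ε) :
    v1C ε s u v = Gc ε (2 * v3C ε s u v - 1) := by
  simp only [v1C, hr1, lam_zero hε h]; ring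

lemma v1_eq_B (hε : 0 < ε) (hr1 : rr 1 s = 1) (h : 1/2 + ε ≤ u2C ε s u v) :
    v1C ε s u v = Gc ε (2 * v3C ε s u v) := by
  simp only [v1C, hr1, lam_one hε h]; ring

def DEADp (ε x y : ℝ) : Prop :=
  x ≤ ε ∨ 1 - ε ≤ x ∨ (1/2 - ε ≤ x ∧ x ≤ 1/2 + ε) ∨ y ≤ 2*ε ∨ 1 - 2*ε ≤ y

lemma start_id (hs : s ≤ 1/16) : u2C ε s u v = u ∧ v1C ε s u v = v := by
  have h1 : rr 1 s = 0 := rr_zero (by linarith)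
  have h3 : rr 3 s = 0 := rr_zero (by linarith)
  have h5 : rr 5 s = 0 := rr_zero (by linarith)
  have hv3 : v3C ε s u v = v := by simp only [v3C, h5]; ring
  constructor
  · simp only [u2C, h3]; ring
  · simp only [v1C, h1, hv3]; ring

lemma ucollar (hε : 0 < ε) (h : u ≤ ε/2 ∨ 1 - ε/2 ≤ u) : u2C ε s u v = u := by
  have hν : nuC ε u = 0 := by
    rcases h with h | h
    exacts [nu_zero_lo hε h, nu_zero_hi hε h]
  simp only [u2C, hν]; ring

/-! ### the v-collar lemmas -/

lemma vlow (hε : 0 < ε) (hε16 : ε ≤ 1/16) (hu0 : 0 ≤ u) (hu1 : u ≤ 1)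
    (hv0 : 0 ≤ v) (hv : v ≤ ε/2) : DEADp ε (u2C ε s u v) (v1C ε s u v) := by
  have easy : rr 5 s = 0 → DEADp ε (u2C ε s u v) (v1C ε s u v) := by
    intro h5
    have hv3 : v3C ε s u v = v := by simp only [v3C, h5]; ring
    have hL2 := lam_mem (ε := ε) (u2C ε s u v)
    have hGA := Gc_low hε hε16 (x := 2*v - 1) (by linarith)
    have hGB := Gc_low hε hε16 (x := 2*v) (by linarith)
    have hr1 := rr_mem 1 s
    have hv1 : v1C ε s u v = (1 - rr 1 s) * v +
        rr 1 s * ((1 - lamC ε (u2C ε s u v)) * Gc ε (2*v - 1) +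
          lamC ε (u2C ε s u v) * Gc ε (2*v)) := by
      simp only [v1C, hv3]
    have hmix0 : 0 ≤ (1 - lamC ε (u2C ε s u v)) * Gc ε (2*v - 1) +
        lamC ε (u2C ε s u v) * Gc ε (2*v) := by nlinarith
    have hmix1 : (1 - lamC ε (u2C ε s u v)) * Gc ε (2*v - 1) +
        lamC ε (u2C ε s u v) * Gc ε (2*v) ≤ ε := by nlinarith
    refine Or.inr (Or.inr (Or.inr (Or.inl ?_)))
    rw [hv1]
    nlinarith
  rcases regime s with hreg | hreg | hreg
  · exact easy hreg.2
  · exact easy hreg.2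
  obtain ⟨h1, h3⟩ := hreg
  have hC : CapC ε v = v := Cap_id hε (by linarith)
  have hr3 := rr_mem 5 s
  have hLm := lam_mem (ε := ε) u
  have hv3 : v3C ε s u v = (1 - rr 5 s)*v + rr 5 s*((v + lamC ε u)/2) := by
    simp only [v3C, hC]
  have h2v31 : 2 * v3C ε s u v - 1 ≤ ε := by
    rw [hv3]
    nlinarith [mul_nonneg hr3.1 hv0, mul_le_one₀ hr3.2 hLm.1 hLm.2]
  have hGA := Gc_low hε hε16 h2v31
  by_cases hA : u2C ε s u v ≤ 1/2 - ε
  · refine Or.inr (Or.inr (Or.inr (Or.inl ?_)))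
    rw [v1_eq_A hε h1 hA]; linarith [hGA.2]
  by_cases hB : 1/2 + ε ≤ u2C ε s u v
  · have hv1 := v1_eq_B hε h1 hB
    by_cases hu : u ≤ 1/2 - ε
    · have hLu : lamC ε u = 0 := lam_zero hε hu
      have hGB : Gc ε (2 * v3C ε s u v) ≤ ε := by
        refine (Gc_low hε hε16 ?_).2
        rw [hv3, hLu]
        nlinarith [mul_nonneg hr3.1 hv0]
      refine Or.inr (Or.inr (Or.inr (Or.inl ?_)))
      rw [hv1]; linarith
    by_cases hu' : 1/2 + ε ≤ u
    · by_cases hb1 : v3C ε s u v ≤ 1/2 - ε/2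
      · have hU2 : u2C ε s u v = u + nuC ε u / 2 := by
          simp only [u2C, h3, bet_neg hε hb1]; ring
        refine Or.inr (Or.inl ?_)
        rw [hU2]
        rcases le_or_gt u (1 - ε) with hcase | hcase
        · rw [nu_one hε (by linarith) hcase]; linarith
        · linarith [(nu_mem (ε := ε) u).1]
      · have hGB : 1 - ε ≤ Gc ε (2 * v3C ε s u v) :=
          (Gc_high hε hε16 (by linarith [not_le.1 hb1])).1
        refine Or.inr (Or.inr (Or.inr (Or.inr ?_)))
        rw [hv1]; linarith
    · push_neg at hu hu'
      by_cases hb1 : v3C ε s u v ≤ 1/2 - ε/2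
      · have hν : nuC ε u = 1 := nu_one hε (by linarith) (by linarith)
        have hU2 : u2C ε s u v = u + 1/2 := by
          simp only [u2C, h3, bet_neg hε hb1, hν]; ring
        refine Or.inr (Or.inl ?_)
        rw [hU2]; linarith
      · have hGB : 1 - ε ≤ Gc ε (2 * v3C ε s u v) :=
          (Gc_high hε hε16 (by linarith [not_le.1 hb1])).1
        refine Or.inr (Or.inr (Or.inr (Or.inr ?_)))
        rw [hv1]; linarith
  · push_neg at hA hB
    exact Or.inr (Or.inr (Or.inl ⟨hA.le, hB.le⟩))

lemma vhigh (hε : 0 < ε) (hε16 : ε ≤ 1/16) (hu0 : 0 ≤ u) (hu1 : u ≤ 1)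
    (hv : 1 - ε/2 ≤ v) (hv1 : v ≤ 1) : DEADp ε (u2C ε s u v) (v1C ε s u v) := by
  have easy : rr 5 s = 0 → DEADp ε (u2C ε s u v) (v1C ε s u v) := by
    intro h5
    have hv3 : v3C ε s u v = v := by simp only [v3C, h5]; ring
    have hL2 := lam_mem (ε := ε) (u2C ε s u v)
    have hGA := Gc_high hε hε16 (x := 2*v - 1) (by linarith)
    have hGB := Gc_high hε hε16 (x := 2*v) (by linarith)
    have hr1 := rr_mem 1 s
    have hv1e : v1C ε s u v = (1 - rr 1 s) * v +
        rr 1 s * ((1 - lamC ε (u2C ε s u v)) * Gc ε (2*v - 1) +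
          lamC ε (u2C ε s u v) * Gc ε (2*v)) := by
      simp only [v1C, hv3]
    have hmix1 : 1 - ε ≤ (1 - lamC ε (u2C ε s u v)) * Gc ε (2*v - 1) +
        lamC ε (u2C ε s u v) * Gc ε (2*v) := by nlinarith
    refine Or.inr (Or.inr (Or.inr (Or.inr ?_)))
    rw [hv1e]
    nlinarith
  rcases regime s with hreg | hreg | hreg
  · exact easy hreg.2
  · exact easy hreg.2
  obtain ⟨h1, h3⟩ := hreg
  have hCap := Cap_high hε hε16 (by linarith) hv1
  have hr3 := rr_mem 5 s
  have hLm := lam_mem (ε := ε) u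
  have hv3lb : 1/2 - ε ≤ v3C ε s u v := by
    simp only [v3C]
    nlinarith [mul_nonneg (by linarith : (0:ℝ) ≤ 1 - rr 5 s) (by linarith : (0:ℝ) ≤ v - (1/2 - ε)),
      mul_nonneg hr3.1 (by linarith [hCap.1, hLm.1] :
        (0:ℝ) ≤ (CapC ε v + lamC ε u)/2 - (1/2 - ε))]
  by_cases hA : u2C ε s u v ≤ 1/2 - ε
  · have hv1e := v1_eq_A hε h1 hA
    by_cases hu' : 1/2 + ε ≤ u
    · have hLu := lam_one hε hu'
      have hv3big : 1 - ε ≤ v3C ε s u v := by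
        simp only [v3C, hLu]
        nlinarith [mul_nonneg (by linarith : (0:ℝ) ≤ 1 - rr 5 s) (by linarith : (0:ℝ) ≤ v - (1 - ε)),
          mul_nonneg hr3.1 (by linarith [hCap.1] : (0:ℝ) ≤ (CapC ε v + 1)/2 - (1 - ε))]
      refine Or.inr (Or.inr (Or.inr (Or.inr ?_)))
      rw [hv1e]
      exact Gc_high2 hε hε16 (by linarith)
    by_cases hu : u ≤ 1/2 - ε
    · by_cases hb2 : 1/2 + ε/2 ≤ v3C ε s u v
      · have hU2 : u2C ε s u v = u - nuC ε u / 2 := by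
          simp only [u2C, h3, bet_pos hε hb2]; ring
        refine Or.inl ?_
        rw [hU2]
        rcases le_or_gt u ε with hc | hc
        · linarith [(nu_mem (ε := ε) u).1]
        · rw [nu_one hε hc.le (by linarith)]; linarith
      · refine Or.inr (Or.inr (Or.inr (Or.inl ?_)))
        rw [hv1e]
        linarith [(Gc_low hε hε16 (x := 2 * v3C ε s u v - 1)
          (by linarith [not_le.1 hb2])).2]
    · push_neg at hu hu'
      have hν : nuC ε u = 1 := nu_one hε (by linarith) (by linarith)
      by_cases hb2 : 1/2 + ε/2 ≤ v3C ε s u v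
      · have hU2 : u2C ε s u v = u - 1/2 := by
          simp only [u2C, h3, bet_pos hε hb2, hν]; ring
        refine Or.inl ?_
        rw [hU2]; linarith
      · refine Or.inr (Or.inr (Or.inr (Or.inl ?_)))
        rw [hv1e]
        linarith [(Gc_low hε hε16 (x := 2 * v3C ε s u v - 1)
          (by linarith [not_le.1 hb2])).2]
  by_cases hB : 1/2 + ε ≤ u2C ε s u v
  · refine Or.inr (Or.inr (Or.inr (Or.inr ?_)))
    rw [v1_eq_B hε h1 hB]
    exact Gc_high2 hε hε16 (by linarith)
  · push_neg at hA hB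
    exact Or.inr (Or.inr (Or.inl ⟨hA.le, hB.le⟩))

/-! ### the final-time computation -/

set_option maxHeartbeats 2000000 in
lemma final_eq (hε : 0 < ε) (hε16 : ε ≤ 1/16) (hs : 3/4 ≤ s) (hu0 : 0 ≤ u) (hu1 : u ≤ 1)
    (hv0 : 0 ≤ v) (hv1 : v ≤ 1) :
    (ε ≤ u ∧ u ≤ 1/2 - ε ∧ 2*ε ≤ v ∧ v ≤ 1 - 2*ε ∧
      u2C ε s u v = u + 1/2 ∧ v1C ε s u v = v) ∨
    (1/2 + ε ≤ u ∧ u ≤ 1 - ε ∧ 2*ε ≤ v ∧ v ≤ 1 - 2*ε ∧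
      u2C ε s u v = u - 1/2 ∧ v1C ε s u v = v) ∨
    (DEADp ε (u2C ε s u v) (v1C ε s u v) ∧
      (u ≤ 2*ε ∨ 1 - 2*ε ≤ u ∨ (1/2 - ε ≤ u ∧ u ≤ 1/2 + ε) ∨ v ≤ 2*ε ∨ 1 - 2*ε ≤ v)) := by
  have h1 : rr 1 s = 1 := rr_one (by linarith)
  have h3 : rr 3 s = 1 := rr_one (by linarith)
  have h5 : rr 5 s = 1 := rr_one (by linarith)
  have hv3 : v3C ε s u v = (CapC ε v + lamC ε u)/2 := by simp only [v3C, h5]; ring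
  by_cases hC1 : u < ε
  · -- far-left collar
    have hLu : lamC ε u = 0 := lam_zero hε (by linarith)
    have hCap := Cap_mem hε hε16 hv0 hv1
    have hv3v : v3C ε s u v = CapC ε v / 2 := by rw [hv3, hLu]; ring
    have hb : v3C ε s u v ≤ 1/2 - ε/2 := by rw [hv3v]; linarith [hCap.2]
    have hU2 : u2C ε s u v = u + nuC ε u / 2 := by
      simp only [u2C, h3, bet_neg hε hb]; ring
    have hU2ub : u2C ε s u v < 1/2 + ε := by rw [hU2]; linarith [(nu_mem (ε := ε) u).2]
    refine Or.inr (Or.inr ⟨?_, Or.inl (by linarith)⟩)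
    by_cases hA : u2C ε s u v ≤ 1/2 - ε
    · refine Or.inr (Or.inr (Or.inr (Or.inl ?_)))
      rw [v1_eq_A hε h1 hA, hv3v,
        Gc_eps hε hε16 (by linarith [hCap.2] : 2 * (CapC ε v / 2) - 1 ≤ 0)]
      linarith
    · exact Or.inr (Or.inr (Or.inl ⟨by linarith [not_le.1 hA], hU2ub.le⟩))
  by_cases hC2 : u ≤ 1/2 - ε
  · -- left support block
    have hLu : lamC ε u = 0 := lam_zero hε hC2
    have hν : nuC ε u = 1 := nu_one hε (by linarith) (by linarith)
    have hCap := Cap_mem hε hε16 hv0 hv1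
    have hv3v : v3C ε s u v = CapC ε v / 2 := by rw [hv3, hLu]; ring
    have hb : v3C ε s u v ≤ 1/2 - ε/2 := by rw [hv3v]; linarith [hCap.2]
    have hU2 : u2C ε s u v = u + 1/2 := by
      simp only [u2C, h3, bet_neg hε hb, hν]; ring
    have hv1e : v1C ε s u v = Gc ε (2 * v3C ε s u v) :=
      v1_eq_B hε h1 (by rw [hU2]; linarith)
    by_cases hva : v < 2*ε
    · refine Or.inr (Or.inr ⟨?_, Or.inr (Or.inr (Or.inr (Or.inl hva.le)))⟩)
      refine Or.inr (Or.inr (Or.inr (Or.inl ?_)))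
      rw [hv1e, hv3v, Cap_id hε (by linarith), show (2:ℝ) * (v/2) = v by ring]
      exact Gc_low2 hε hε16 (by linarith)
    by_cases hvb : v ≤ 1 - 2*ε
    · push_neg at hva
      have hCap' : CapC ε v = v := Cap_id hε hvb
      refine Or.inl ⟨by linarith, hC2, hva, hvb, hU2, ?_⟩
      rw [hv1e, hv3v, hCap', show (2:ℝ) * (v/2) = v by ring]
      exact Gc_id hε hε16 (by linarith) (by linarith)
    · push_neg at hvb
      have hCap' := Cap_high hε hε16 (by linarith) hv1
      refine Or.inr (Or.inr ⟨?_, Or.inr (Or.inr (Or.inr (Or.inr (by linarith))))⟩)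
      refine Or.inr (Or.inr (Or.inr (Or.inr ?_)))
      rw [hv1e, hv3v, show (2:ℝ) * (CapC ε v / 2) = CapC ε v by ring,
        Gc_id hε hε16 (by linarith [hCap'.1]) hCap'.2]
      linarith [hCap'.1]
  by_cases hC3 : u < 1/2 + ε
  · -- middle strip
    push_neg at hC2
    have hν : nuC ε u = 1 := nu_one hε (by linarith) (by linarith)
    refine Or.inr (Or.inr ⟨?_, Or.inr (Or.inr (Or.inl ⟨by linarith, by linarith⟩))⟩)
    by_cases hb1 : v3C ε s u v ≤ 1/2 - ε/2
    · have hU2 : u2C ε s u v = u + 1/2 := by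
        simp only [u2C, h3, bet_neg hε hb1, hν]; ring
      refine Or.inr (Or.inl ?_)
      rw [hU2]; linarith
    by_cases hb2 : 1/2 + ε/2 ≤ v3C ε s u v
    · have hU2 : u2C ε s u v = u - 1/2 := by
        simp only [u2C, h3, bet_pos hε hb2, hν]; ring
      refine Or.inl ?_
      rw [hU2]; linarith
    · push_neg at hb1 hb2
      have hGA := (Gc_low hε hε16 (x := 2 * v3C ε s u v - 1) (by linarith)).2
      have hGB := (Gc_high hε hε16 (x := 2 * v3C ε s u v) (by linarith)).1
      by_cases hA : u2C ε s u v ≤ 1/2 - ε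
      · refine Or.inr (Or.inr (Or.inr (Or.inl ?_)))
        rw [v1_eq_A hε h1 hA]; linarith
      by_cases hB : 1/2 + ε ≤ u2C ε s u v
      · refine Or.inr (Or.inr (Or.inr (Or.inr ?_)))
        rw [v1_eq_B hε h1 hB]; linarith
      · push_neg at hA hB
        exact Or.inr (Or.inr (Or.inl ⟨hA.le, hB.le⟩))
  by_cases hC4 : u ≤ 1 - ε
  · -- right support block
    push_neg at hC3
    have hLu : lamC ε u = 1 := lam_one hε (by linarith)
    have hν : nuC ε u = 1 := nu_one hε (by linarith) hC4
    have hv3v : v3C ε s u v = (CapC ε v + 1)/2 := by rw [hv3, hLu]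
    by_cases hva : v < 2*ε
    · have hCap' : CapC ε v = v := Cap_id hε (by linarith)
      have hGA : Gc ε (2 * v3C ε s u v - 1) ≤ 2*ε := by
        rw [hv3v, hCap', show (2:ℝ) * ((v + 1)/2) - 1 = v by ring]
        exact Gc_low2 hε hε16 (by linarith)
      have hGB : 1 - ε ≤ Gc ε (2 * v3C ε s u v) := by
        rw [hv3v, hCap']
        exact (Gc_high hε hε16 (by linarith)).1
      refine Or.inr (Or.inr ⟨?_, Or.inr (Or.inr (Or.inr (Or.inl hva.le)))⟩)
      by_cases hA : u2C ε s u v ≤ 1/2 - ε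
      · refine Or.inr (Or.inr (Or.inr (Or.inl ?_)))
        rw [v1_eq_A hε h1 hA]; linarith
      by_cases hB : 1/2 + ε ≤ u2C ε s u v
      · refine Or.inr (Or.inr (Or.inr (Or.inr ?_)))
        rw [v1_eq_B hε h1 hB]; linarith
      · push_neg at hA hB
        exact Or.inr (Or.inr (Or.inl ⟨hA.le, hB.le⟩))
    by_cases hvb : v ≤ 1 - 2*ε
    · push_neg at hva
      have hCap' : CapC ε v = v := Cap_id hε hvb
      have hb2 : 1/2 + ε/2 ≤ v3C ε s u v := by rw [hv3v, hCap']; linarith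
      have hU2 : u2C ε s u v = u - 1/2 := by
        simp only [u2C, h3, bet_pos hε hb2, hν]; ring
      have hv1e : v1C ε s u v = Gc ε (2 * v3C ε s u v - 1) :=
        v1_eq_A hε h1 (by rw [hU2]; linarith)
      refine Or.inr (Or.inl ⟨by linarith, hC4, hva, hvb, hU2, ?_⟩)
      rw [hv1e, hv3v, hCap', show (2:ℝ) * ((v + 1)/2) - 1 = v by ring]
      exact Gc_id hε hε16 (by linarith) (by linarith)
    · push_neg at hvb
      have hCap' := Cap_high hε hε16 (by linarith) hv1
      have hGA : 1 - 2*ε ≤ Gc ε (2 * v3C ε s u v - 1) := by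
        rw [hv3v, show (2:ℝ) * ((CapC ε v + 1)/2) - 1 = CapC ε v by ring]
        exact Gc_high2 hε hε16 (by linarith [hCap'.1])
      have hGB : 1 - ε ≤ Gc ε (2 * v3C ε s u v) := by
        rw [hv3v]
        exact (Gc_high hε hε16 (by linarith [hCap'.1])).1
      refine Or.inr (Or.inr ⟨?_, Or.inr (Or.inr (Or.inr (Or.inr (by linarith))))⟩)
      by_cases hA : u2C ε s u v ≤ 1/2 - ε
      · refine Or.inr (Or.inr (Or.inr (Or.inr ?_)))
        rw [v1_eq_A hε h1 hA]; linarith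
      by_cases hB : 1/2 + ε ≤ u2C ε s u v
      · refine Or.inr (Or.inr (Or.inr (Or.inr ?_)))
        rw [v1_eq_B hε h1 hB]; linarith
      · push_neg at hA hB
        exact Or.inr (Or.inr (Or.inl ⟨hA.le, hB.le⟩))
  · -- far-right collar
    push_neg at hC4
    have hLu : lamC ε u = 1 := lam_one hε (by linarith)
    have hv3v : v3C ε s u v = (CapC ε v + 1)/2 := by rw [hv3, hLu]
    have hCap := Cap_mem hε hε16 hv0 hv1
    have hU2lb : 1/2 - ε < u2C ε s u v := by
      simp only [u2C, h3]
      nlinarith [mul_le_one₀ (bet_mem (ε := ε) (v3C ε s u v)).2 (nu_mem (ε := ε) u).1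
        (nu_mem (ε := ε) u).2]
    have hGB : 1 - ε ≤ Gc ε (2 * v3C ε s u v) := by
      rw [hv3v]
      exact (Gc_high hε hε16 (by linarith [hCap.1])).1
    refine Or.inr (Or.inr ⟨?_, Or.inr (Or.inl (by linarith))⟩)
    by_cases hB : 1/2 + ε ≤ u2C ε s u v
    · refine Or.inr (Or.inr (Or.inr (Or.inr ?_)))
      rw [v1_eq_B hε h1 hB]; linarith
    · push_neg at hB
      exact Or.inr (Or.inr (Or.inl ⟨hU2lb.le, hB.le⟩))

/-! ### smoothness of the building blocks -/

attribute [fun_prop] contDiff_sstep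

section smoothness

variable {F : Type*} [NormedAddCommGroup F] [NormedSpace ℝ F]

lemma contDiff_u2C {f g h : F → ℝ} (hf : ContDiff ℝ (⊤ : ℕ∞) f)
    (hg : ContDiff ℝ (⊤ : ℕ∞) g) (hh : ContDiff ℝ (⊤ : ℕ∞) h) (ε : ℝ) :
    ContDiff ℝ (⊤ : ℕ∞) (fun x => u2C ε (f x) (g x) (h x)) := by
  unfold u2C v3C rr betC nuC lamC CapC
  simp only [div_eq_mul_inv]
  fun_prop

lemma contDiff_v1C {f g h : F → ℝ} (hf : ContDiff ℝ (⊤ : ℕ∞) f)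
    (hg : ContDiff ℝ (⊤ : ℕ∞) g) (hh : ContDiff ℝ (⊤ : ℕ∞) h) (ε : ℝ) :
    ContDiff ℝ (⊤ : ℕ∞) (fun x => v1C ε (f x) (g x) (h x)) := by
  unfold v1C u2C v3C rr betC nuC lamC CapC Gc
  simp only [div_eq_mul_inv]
  fun_prop

lemma contDiff_Gc_comp {f : F → ℝ} (hf : ContDiff ℝ (⊤ : ℕ∞) f) (ε : ℝ) :
    ContDiff ℝ (⊤ : ℕ∞) (fun x => Gc ε (f x)) := by
  unfold Gc
  simp only [div_eq_mul_inv]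
  fun_prop

end smoothness

lemma rank_le_n {n : ℕ} {W : Type*} [AddCommGroup W] [Module ℝ W]
    (f : (Fin n → ℝ) →ₗ[ℝ] W) : LinearMap.rank f ≤ (n : Cardinal) := by
  have h := lift_rank_range_le f
  rw [rank_fin_fun] at h
  simpa using h

/-! ### deadness of concatenations near the collar -/

lemma concat_dead {X : Type*} {n : ℕ} (hn : 0 < n) (x₀ : X)
    (f g : (Fin n → ℝ) → X) (εf εg ε : ℝ) (hε : 0 < ε) (hf8 : 8*ε ≤ εf) (hg8 : 8*ε ≤ εg)
    (hε16 : ε ≤ 1/16)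
    (hf : ∀ t ∈ Set.Icc (0 : Fin n → ℝ) 1, (∃ i, t i < εf ∨ 1 - εf < t i) → f t = x₀)
    (hg : ∀ t ∈ Set.Icc (0 : Fin n → ℝ) 1, (∃ i, t i < εg ∨ 1 - εg < t i) → g t = x₀)
    (q : Fin n → ℝ) (hq : q ∈ Set.Icc (0 : Fin n → ℝ) 1)
    (hd : q ⟨0, hn⟩ ≤ 2*ε ∨ 1 - 2*ε ≤ q ⟨0, hn⟩ ∨
      (1/2 - ε ≤ q ⟨0, hn⟩ ∧ q ⟨0, hn⟩ ≤ 1/2 + ε) ∨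
      ∃ i, i ≠ ⟨0, hn⟩ ∧ (q i ≤ 2*ε ∨ 1 - 2*ε ≤ q i)) :
    concatFun hn f g q = x₀ := by
  have hq0 : ∀ i, (0:ℝ) ≤ q i := fun i => hq.1 i
  have hq1 : ∀ i, q i ≤ 1 := fun i => hq.2 i
  have hmem : ∀ z : ℝ, 0 ≤ z → z ≤ 1 →
      Function.update q ⟨0, hn⟩ z ∈ Set.Icc (0 : Fin n → ℝ) 1 := by
    intro z h0 h1
    constructor
    · intro i
      simp only [Pi.zero_apply, Function.update_apply]
      split_ifs
      · exact h0
      · exact hq0 i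
    · intro i
      simp only [Pi.one_apply, Function.update_apply]
      split_ifs
      · exact h1
      · exact hq1 i
  simp only [concatFun]
  by_cases h5 : q ⟨0, hn⟩ ≤ 1/2
  · rw [if_pos h5]
    apply hf _ (hmem _ (by linarith [hq0 ⟨0, hn⟩]) (by linarith))
    rcases hd with h | h | h | ⟨i, hi, h⟩
    · exact ⟨⟨0, hn⟩, Or.inl (by rw [Function.update_self]; linarith)⟩
    · exfalso; linarith
    · exact ⟨⟨0, hn⟩, Or.inr (by rw [Function.update_self]; linarith [h.1])⟩
    · refine ⟨i, ?_⟩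
      rw [Function.update_apply, if_neg hi]
      rcases h with h | h
      · exact Or.inl (by linarith)
      · exact Or.inr (by linarith)
  · rw [if_neg h5]
    push_neg at h5
    apply hg _ (hmem _ (by linarith) (by linarith [hq1 ⟨0, hn⟩]))
    rcases hd with h | h | h | ⟨i, hi, h⟩
    · exfalso; linarith
    · exact ⟨⟨0, hn⟩, Or.inr (by rw [Function.update_self]; linarith)⟩
    · exact ⟨⟨0, hn⟩, Or.inl (by rw [Function.update_self]; linarith [h.2])⟩
    · refine ⟨i, ?_⟩
      rw [Function.update_apply, if_neg hi]
      rcases h with h | h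
      · exact Or.inl (by linarith)
      · exact Or.inr (by linarith)

end Pinn

set_option maxHeartbeats 4000000 in
/-- For `n ≥ 2` and any two smooth `n`-loops `a, b`, the concatenations
`a ⋆ b` and `b ⋆ a` are rank-`n` homotopic; hence `π_n^n(X,x₀)` is abelian. -/
theorem pinn_comm {E HM : Type*} [NormedAddCommGroup E] [NormedSpace ℝ E]
    [TopologicalSpace HM] (IM : ModelWithCorners ℝ E HM)
    (X : Type*) [TopologicalSpace X] [ChartedSpace HM X] [IsManifold IM (⊤ : ℕ∞) X]
    (n : ℕ) (hn : 0 < n) (hn2 : 2 ≤ n) (x₀ : X) :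
    ∀ a b ab ba : SmoothNLoop IM X n x₀,
      (∀ t ∈ Cube n, ab.toFun t = concatFun hn a.toFun b.toFun t) →
      (∀ t ∈ Cube n, ba.toFun t = concatFun hn b.toFun a.toFun t) →
      ThinHomotopic ab ba := by
  intro a b ab ba hab hba
  classical
  obtain ⟨εa, hεa, ha⟩ := a.based
  obtain ⟨εb, hεb, hb⟩ := b.based
  obtain ⟨U, hUo, hUc, hUs⟩ := ab.smooth
  set i0 : Fin n := ⟨0, hn⟩ with hi0def
  set i1 : Fin n := ⟨1, by omega⟩ with hi1def
  have hne : i1 ≠ i0 := by simp [hi0def, hi1def, Fin.ext_iff]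
  set ε : ℝ := min (min εa εb) (1/2) / 8 with hεdef
  have hε : 0 < ε := by
    have : 0 < min (min εa εb) (1/2) := lt_min (lt_min hεa hεb) (by norm_num)
    rw [hεdef]; linarith
  have hε16 : ε ≤ 1/16 := by
    have := min_le_right (min εa εb) (1/2)
    rw [hεdef]; linarith
  have hεa8 : 8*ε ≤ εa := by
    have h1 := min_le_left (min εa εb) (1/2)
    have h2 := min_le_left εa εb
    rw [hεdef]; linarith
  have hεb8 : 8*ε ≤ εb := by
    have h1 := min_le_left (min εa εb) (1/2)
    have h2 := min_le_right εa εb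
    rw [hεdef]; linarith
  set Mv : ℝ × (Fin n → ℝ) → (Fin n → ℝ) := fun p i =>
    Pinn.Gc ε (if i = i0 then Pinn.u2C ε p.1 (p.2 i0) (p.2 i1)
      else if i = i1 then Pinn.v1C ε p.1 (p.2 i0) (p.2 i1) else p.2 i) with hMv
  have hM0 : ∀ (s : ℝ) (t : Fin n → ℝ),
      Mv (s, t) i0 = Pinn.Gc ε (Pinn.u2C ε s (t i0) (t i1)) := by
    intro s t; simp only [hMv, eq_self_iff_true, if_true]
  have hM1 : ∀ (s : ℝ) (t : Fin n → ℝ),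
      Mv (s, t) i1 = Pinn.Gc ε (Pinn.v1C ε s (t i0) (t i1)) := by
    intro s t; simp only [hMv, if_neg hne, eq_self_iff_true, if_true]
  have hMo : ∀ (s : ℝ) (t : Fin n → ℝ) (i : Fin n), i ≠ i0 → i ≠ i1 →
      Mv (s, t) i = Pinn.Gc ε (t i) := by
    intro s t i h h'; simp only [hMv, if_neg h, if_neg h']
  have hMmem : ∀ p, Mv p ∈ Set.Icc (0 : Fin n → ℝ) 1 := by
    intro p
    constructor
    · intro i
      simp only [Pi.zero_apply, hMv]
      exact (Pinn.Gc_mem hε hε16 _).1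
    · intro i
      simp only [Pi.one_apply, hMv]
      exact (Pinn.Gc_mem hε hε16 _).2
  have hGtmem : ∀ t : Fin n → ℝ, (fun i => Pinn.Gc ε (t i)) ∈ Set.Icc (0 : Fin n → ℝ) 1 := by
    intro t
    constructor
    · intro i
      simp only [Pi.zero_apply]
      exact (Pinn.Gc_mem hε hε16 _).1
    · intro i
      simp only [Pi.one_apply]
      exact (Pinn.Gc_mem hε hε16 _).2
  have cdeadA := Pinn.concat_dead hn x₀ a.toFun b.toFun εa εb ε hε hεa8 hεb8 hε16 ha hb
  have cdeadB := Pinn.concat_dead hn x₀ b.toFun a.toFun εb εa ε hε hεb8 hεa8 hε16 hb ha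
  have Kdead : ∀ (s : ℝ) (t : Fin n → ℝ),
      Pinn.DEADp ε (Pinn.u2C ε s (t i0) (t i1)) (Pinn.v1C ε s (t i0) (t i1)) →
      ab.toFun (Mv (s, t)) = x₀ := by
    intro s t hd
    rw [hab _ (hMmem (s, t))]
    apply cdeadA _ (hMmem (s, t))
    rcases hd with h | h | h | h | h
    · exact Or.inl (by rw [hM0]; linarith [(Pinn.Gc_low hε hε16 h).2])
    · exact Or.inr (Or.inl (by rw [hM0]; linarith [(Pinn.Gc_high hε hε16 h).1]))
    · refine Or.inr (Or.inr (Or.inl ?_))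
      rw [hM0, Pinn.Gc_id hε hε16 (by linarith [h.1]) (by linarith [h.2])]
      exact h
    · exact Or.inr (Or.inr (Or.inr ⟨i1, hne, Or.inl
        (by rw [hM1]; exact Pinn.Gc_low2 hε hε16 h)⟩))
    · exact Or.inr (Or.inr (Or.inr ⟨i1, hne, Or.inr
        (by rw [hM1]; exact Pinn.Gc_high2 hε hε16 h)⟩))
  have Kother : ∀ (s : ℝ) (t : Fin n → ℝ) (i : Fin n), i ≠ i0 → i ≠ i1 →
      (t i ≤ 2*ε ∨ 1 - 2*ε ≤ t i) → ab.toFun (Mv (s, t)) = x₀ := by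
    intro s t i h0 h1 h
    rw [hab _ (hMmem (s, t))]
    apply cdeadA _ (hMmem (s, t))
    refine Or.inr (Or.inr (Or.inr ⟨i, h0, ?_⟩))
    rw [hMo s t i h0 h1]
    rcases h with h | h
    · exact Or.inl (Pinn.Gc_low2 hε hε16 h)
    · exact Or.inr (Pinn.Gc_high2 hε hε16 h)
  have Wcube : ∀ t ∈ Set.Icc (0 : Fin n → ℝ) 1,
      concatFun hn a.toFun b.toFun (fun i => Pinn.Gc ε (t i)) =
        concatFun hn a.toFun b.toFun t := by
    intro t ht
    by_cases hall : ∀ i, ε ≤ t i ∧ t i ≤ 1 - ε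
    · have hfe : (fun i => Pinn.Gc ε (t i)) = t :=
        funext fun i => Pinn.Gc_id hε hε16 (hall i).1 (hall i).2
      rw [hfe]
    · push_neg at hall
      obtain ⟨i, hi⟩ := hall
      have hi' : t i < ε ∨ 1 - ε < t i := by
        by_cases h : ε ≤ t i
        · exact Or.inr (hi h)
        · exact Or.inl (not_le.1 h)
      have h1 : concatFun hn a.toFun b.toFun (fun j => Pinn.Gc ε (t j)) = x₀ := by
        apply cdeadA _ (hGtmem t)
        by_cases hii : i = i0
        · subst hii
          rcases hi' with h | h
          · exact Or.inl (by linarith [(Pinn.Gc_low hε hε16 h.le).2])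
          · exact Or.inr (Or.inl (by linarith [(Pinn.Gc_high hε hε16 h.le).1]))
        · refine Or.inr (Or.inr (Or.inr ⟨i, hii, ?_⟩))
          rcases hi' with h | h
          · exact Or.inl (Pinn.Gc_low2 hε hε16 (by linarith))
          · exact Or.inr (Pinn.Gc_high2 hε hε16 (by linarith))
      have h2 : concatFun hn a.toFun b.toFun t = x₀ := by
        apply cdeadA t ht
        by_cases hii : i = i0
        · subst hii
          rcases hi' with h | h
          · exact Or.inl (by linarith)
          · exact Or.inr (Or.inl (by linarith))
        · refine Or.inr (Or.inr (Or.inr ⟨i, hii, ?_⟩))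
          rcases hi' with h | h
          · exact Or.inl (by linarith)
          · exact Or.inr (by linarith)
      rw [h1, h2]
  have hp1 : ContDiff ℝ (⊤ : ℕ∞) (fun p : ℝ × (Fin n → ℝ) => p.1) := contDiff_fst
  have hp20 : ContDiff ℝ (⊤ : ℕ∞) (fun p : ℝ × (Fin n → ℝ) => p.2 i0) :=
    (ContinuousLinearMap.proj (R := ℝ) (φ := fun _ : Fin n => ℝ) i0).contDiff.comp contDiff_snd
  have hp21 : ContDiff ℝ (⊤ : ℕ∞) (fun p : ℝ × (Fin n → ℝ) => p.2 i1) :=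
    (ContinuousLinearMap.proj (R := ℝ) (φ := fun _ : Fin n => ℝ) i1).contDiff.comp contDiff_snd
  have hMc : ContDiff ℝ (⊤ : ℕ∞) Mv := by
    rw [hMv]
    apply contDiff_pi.2
    intro i
    by_cases hi : i = i0
    · subst hi
      have he : (fun p : ℝ × (Fin n → ℝ) =>
          Pinn.Gc ε (if i0 = i0 then Pinn.u2C ε p.1 (p.2 i0) (p.2 i1)
            else if i0 = i1 then Pinn.v1C ε p.1 (p.2 i0) (p.2 i1) else p.2 i0)) =
          fun p : ℝ × (Fin n → ℝ) => Pinn.Gc ε (Pinn.u2C ε p.1 (p.2 i0) (p.2 i1)) := by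
        funext p; rw [if_pos rfl]
      rw [he]
      exact Pinn.contDiff_Gc_comp (Pinn.contDiff_u2C hp1 hp20 hp21 ε) ε
    by_cases hi1 : i = i1
    · subst hi1
      have he : (fun p : ℝ × (Fin n → ℝ) =>
          Pinn.Gc ε (if i1 = i0 then Pinn.u2C ε p.1 (p.2 i0) (p.2 i1)
            else if i1 = i1 then Pinn.v1C ε p.1 (p.2 i0) (p.2 i1) else p.2 i1)) =
          fun p : ℝ × (Fin n → ℝ) => Pinn.Gc ε (Pinn.v1C ε p.1 (p.2 i0) (p.2 i1)) := by
        funext p; rw [if_neg hne, if_pos rfl]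
      rw [he]
      exact Pinn.contDiff_Gc_comp (Pinn.contDiff_v1C hp1 hp20 hp21 ε) ε
    · have he : (fun p : ℝ × (Fin n → ℝ) =>
          Pinn.Gc ε (if i = i0 then Pinn.u2C ε p.1 (p.2 i0) (p.2 i1)
            else if i = i1 then Pinn.v1C ε p.1 (p.2 i0) (p.2 i1) else p.2 i)) =
          fun p : ℝ × (Fin n → ℝ) => Pinn.Gc ε (p.2 i) := by
        funext p; rw [if_neg hi, if_neg hi1]
      rw [he]
      exact Pinn.contDiff_Gc_comp
        ((ContinuousLinearMap.proj (R := ℝ) (φ := fun _ : Fin n => ℝ) i).contDiff.comp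
          contDiff_snd) ε
  refine ⟨fun p => ab.toFun (Mv p), ε/2, by positivity,
    ⟨Set.univ, isOpen_univ, Set.subset_univ _, ?_⟩, ?_, ?_, ?_, ?_⟩
  · -- smoothness
    exact ContMDiffOn.comp hUs ((contMDiff_iff_contDiff.mpr hMc).contMDiffOn)
      (fun p _ => hUc (hMmem p))
  · -- based
    intro s hs t ht hex
    obtain ⟨i, hi⟩ := hex
    show ab.toFun (Mv (s, t)) = x₀
    by_cases hi0 : i = i0
    · subst hi0
      have hu2 : Pinn.u2C ε s (t i0) (t i1) = t i0 := by
        apply Pinn.ucollar hε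
        rcases hi with h | h
        · exact Or.inl (by linarith)
        · exact Or.inr (by linarith)
      apply Kdead s t
      rcases hi with h | h
      · exact Or.inl (by rw [hu2]; linarith)
      · exact Or.inr (Or.inl (by rw [hu2]; linarith))
    by_cases hi1 : i = i1
    · subst hi1
      apply Kdead s t
      rcases hi with h | h
      · exact Pinn.vlow hε hε16 (by simpa using ht.1 i0) (by simpa using ht.2 i0)
          (by simpa using ht.1 i1) (by linarith)
      · exact Pinn.vhigh hε hε16 (by simpa using ht.1 i0) (by simpa using ht.2 i0)
          (by linarith) (by simpa using ht.2 i1)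
    · apply Kother s t i hi0 hi1
      rcases hi with h | h
      · exact Or.inl (by linarith)
      · exact Or.inr (by linarith)
  · -- starts at ab
    intro s hs t ht hlt
    show ab.toFun (Mv (s, t)) = ab.toFun t
    have hid := Pinn.start_id (ε := ε) (u := t i0) (v := t i1) (s := s) (by linarith)
    have hMt : Mv (s, t) = fun j => Pinn.Gc ε (t j) := by
      funext j
      by_cases hj : j = i0
      · subst hj; rw [hM0, hid.1]
      by_cases hj1 : j = i1
      · subst hj1; rw [hM1, hid.2]
      · rw [hMo s t j hj hj1]
    rw [hMt, hab _ (hGtmem t), Wcube t ht, ← hab t ht]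
  · -- ends at ba
    intro s hs t ht hgt
    show ab.toFun (Mv (s, t)) = ba.toFun t
    rw [hba t ht]
    have h34 : (3:ℝ)/4 ≤ s := by linarith
    rcases Pinn.final_eq hε hε16 h34 (by simpa using ht.1 i0) (by simpa using ht.2 i0)
        (by simpa using ht.1 i1) (by simpa using ht.2 i1) with
      ⟨hA1, hA2, hA3, hA4, hU2, hV1⟩ | ⟨hB1, hB2, hB3, hB4, hU2, hV1⟩ | ⟨hdead, hrhs⟩
    · -- a-block travelled to the right half
      by_cases hw : ∀ j, j ≠ i0 → j ≠ i1 → ε ≤ t j ∧ t j ≤ 1 - ε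
      · have hMt : Mv (s, t) = Function.update t i0 (t i0 + 1/2) := by
          funext j
          by_cases hj : j = i0
          · subst hj
            rw [hM0, hU2, Pinn.Gc_id hε hε16 (by linarith) (by linarith),
              Function.update_self]
          by_cases hj1 : j = i1
          · subst hj1
            rw [hM1, hV1, Pinn.Gc_id hε hε16 (by linarith) (by linarith),
              Function.update_apply, if_neg hne]
          · rw [hMo s t j hj hj1, Pinn.Gc_id hε hε16 (hw j hj hj1).1 (hw j hj hj1).2,
              Function.update_apply, if_neg hj]
        have hupd : Function.update t i0 (t i0 + 1/2) ∈ Set.Icc (0 : Fin n → ℝ) 1 := by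
          constructor
          · intro j
            simp only [Pi.zero_apply, Function.update_apply]
            split_ifs
            · linarith
            · simpa using ht.1 j
          · intro j
            simp only [Pi.one_apply, Function.update_apply]
            split_ifs
            · linarith
            · simpa using ht.2 j
        rw [hMt, hab _ hupd]
        simp only [concatFun, ← hi0def, Function.update_self]
        rw [if_neg (by linarith), if_pos (by linarith : t i0 ≤ 1/2)]
        congr 1
        funext j
        by_cases hj : j = i0
        · subst hj
          simp only [Function.update_self]
          ring
        · simp only [Function.update_apply, if_neg hj]
      · push_neg at hw
        obtain ⟨j, hj0, hj1, hj⟩ := hw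
        have hj' : t j < ε ∨ 1 - ε < t j := by
          by_cases h : ε ≤ t j
          · exact Or.inr (hj h)
          · exact Or.inl (not_le.1 h)
        rw [Kother s t j hj0 hj1
          (by rcases hj' with h | h; exacts [Or.inl (by linarith), Or.inr (by linarith)])]
        symm
        apply cdeadB t ht
        exact Or.inr (Or.inr (Or.inr ⟨j, hj0,
          by rcases hj' with h | h; exacts [Or.inl (by linarith), Or.inr (by linarith)]⟩))
    · -- b-block travelled to the left half
      by_cases hw : ∀ j, j ≠ i0 → j ≠ i1 → ε ≤ t j ∧ t j ≤ 1 - ε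
      · have hMt : Mv (s, t) = Function.update t i0 (t i0 - 1/2) := by
          funext j
          by_cases hj : j = i0
          · subst hj
            rw [hM0, hU2, Pinn.Gc_id hε hε16 (by linarith) (by linarith),
              Function.update_self]
          by_cases hj1 : j = i1
          · subst hj1
            rw [hM1, hV1, Pinn.Gc_id hε hε16 (by linarith) (by linarith),
              Function.update_apply, if_neg hne]
          · rw [hMo s t j hj hj1, Pinn.Gc_id hε hε16 (hw j hj hj1).1 (hw j hj hj1).2,
              Function.update_apply, if_neg hj]
        have hupd : Function.update t i0 (t i0 - 1/2) ∈ Set.Icc (0 : Fin n → ℝ) 1 := by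
          constructor
          · intro j
            simp only [Pi.zero_apply, Function.update_apply]
            split_ifs
            · linarith
            · simpa using ht.1 j
          · intro j
            simp only [Pi.one_apply, Function.update_apply]
            split_ifs
            · linarith
            · simpa using ht.2 j
        rw [hMt, hab _ hupd]
        simp only [concatFun, ← hi0def, Function.update_self]
        rw [if_pos (by linarith : t i0 - 1/2 ≤ 1/2), if_neg (by push_neg; linarith)]
        congr 1
        funext j
        by_cases hj : j = i0
        · subst hj
          simp only [Function.update_self]
          ring
        · simp only [Function.update_apply, if_neg hj]
      · push_neg at hw
        obtain ⟨j, hj0, hj1, hj⟩ := hw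
        have hj' : t j < ε ∨ 1 - ε < t j := by
          by_cases h : ε ≤ t j
          · exact Or.inr (hj h)
          · exact Or.inl (not_le.1 h)
        rw [Kother s t j hj0 hj1
          (by rcases hj' with h | h; exacts [Or.inl (by linarith), Or.inr (by linarith)])]
        symm
        apply cdeadB t ht
        exact Or.inr (Or.inr (Or.inr ⟨j, hj0,
          by rcases hj' with h | h; exacts [Or.inl (by linarith), Or.inr (by linarith)]⟩))
    · -- both sides dead
      rw [Kdead s t hdead]
      symm
      apply cdeadB t ht
      rcases hrhs with h | h | h | h | h
      · exact Or.inl h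
      · exact Or.inr (Or.inl h)
      · exact Or.inr (Or.inr (Or.inl h))
      · exact Or.inr (Or.inr (Or.inr ⟨i1, hne, Or.inl h⟩))
      · exact Or.inr (Or.inr (Or.inr ⟨i1, hne, Or.inr h⟩))
  · -- rank
    intro p hp
    have hMd : MDifferentiableAt 𝓘(ℝ, ℝ × (Fin n → ℝ)) 𝓘(ℝ, Fin n → ℝ) Mv p :=
      (contMDiff_iff_contDiff.mpr hMc).mdifferentiableAt (by simp)
    have habd : MDifferentiableAt 𝓘(ℝ, Fin n → ℝ) IM ab.toFun (Mv p) :=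
      (hUs.contMDiffAt (hUo.mem_nhds (hUc (hMmem p)))).mdifferentiableAt (by simp)
    have hKM : (fun p => ab.toFun (Mv p)) = ab.toFun ∘ Mv := rfl
    rw [hKM, mfderiv_comp p habd hMd, ContinuousLinearMap.toLinearMap_comp]
    exact le_trans (LinearMap.rank_comp_le_left _ _) (Pinn.rank_le_n _)


end
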